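/- arXiv:2412.13358 — 2 statements merged into one kernel-verified Lean document; each statement's English description precedes it below -/
import Mathlib

section
/- Expansion lemma: Let P be a finite set in a metric space and S ⊆ P. Suppose every point p ∈ P \ S lies in a ball B of radius ε·ρ such that |B ∩ S| ≥ z+1. If C₁,…,C_k are balls of radius r covering all of S except at most z points, then the expanded balls C₁*,…,C_k* with the same centers and radius r + 2ε·ρ cover all of P except at most z points (the same outliers). -/
open Metric
open scoped Classical

theorem stmt4 {X : Type*} [MetricSpace X] (k z : ℕ) (ε ρ r : ℝ)
    (hε : 0 ≤ ε) (hρ : 0 ≤ ρ) (hr : 0 ≤ r)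
    (P S : Finset X) (hSP : S ⊆ P)
    (hfull : ∀ p ∈ P \ S, ∃ c : X, dist p c ≤ ε * ρ ∧
      z + 1 ≤ (S.filter (fun s => dist s c ≤ ε * ρ)).card)
    (c : Fin k → X)
    (hcov : (S.filter (fun s => ∀ i, r < dist s (c i))).card ≤ z) :
    (P.filter (fun p => ∀ i, r + 2 * ε * ρ < dist p (c i))) ⊆
      (S.filter (fun s => ∀ i, r < dist s (c i))) ∧
    (P.filter (fun p => ∀ i, r + 2 * ε * ρ < dist p (c i))).card ≤ z := by
  have hsub : (P.filter (fun p => ∀ i, r + 2 * ε * ρ < dist p (c i))) ⊆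
      (S.filter (fun s => ∀ i, r < dist s (c i))) := by
    intro p hp
    rw [Finset.mem_filter] at hp
    obtain ⟨hpP, hpfar⟩ := hp
    by_cases hpS : p ∈ S
    · rw [Finset.mem_filter]
      refine ⟨hpS, fun i => ?_⟩
      have := hpfar i
      nlinarith [mul_nonneg hε hρ]
    · exfalso
      obtain ⟨c', hdc, hcard⟩ := hfull p (Finset.mem_sdiff.mpr ⟨hpP, hpS⟩)
      have hsub2 : (S.filter (fun s => dist s c' ≤ ε * ρ)) ⊆
          (S.filter (fun s => ∀ i, r < dist s (c i))) := by
        intro s hs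
        rw [Finset.mem_filter] at hs ⊢
        refine ⟨hs.1, fun i => ?_⟩
        have h1 : dist p (c i) ≤ dist p c' + dist c' s + dist s (c i) :=
          dist_triangle4 p c' s (c i)
        have h2 : dist c' s ≤ ε * ρ := by rw [dist_comm]; exact hs.2
        have := hpfar i
        linarith
      have := Finset.card_le_card hsub2
      omega
  exact ⟨hsub, le_trans (Finset.card_le_card hsub) hcov⟩
end

section
/- Diameter approximation by a dense subset with full balls: let P be a finite set in a metric space and S ⊆ P such that every p ∈ P \ S is within distance 2ερ of at least z+1 points of S. Then diam_z(S) ≥ diam_z(P) − 4ερ, where diam_z(Q) denotes the minimum over all choices of z outliers of the diameter of the remaining points. -/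
open Metric
open scoped Classical

noncomputable def diamz {X : Type*} [MetricSpace X] (z : ℕ) (P : Finset X) : ℝ :=
  sInf {D : ℝ | ∃ Q : Finset X, Q ⊆ P ∧ Q.card = z ∧
    D = Metric.diam (↑(P \ Q) : Set X)}

theorem stmt10 {X : Type*} [MetricSpace X] (z : ℕ) (ε ρ : ℝ)
    (hε : 0 ≤ ε) (hρ : 0 ≤ ρ)
    (P S : Finset X) (hSP : S ⊆ P) (hz : z ≤ S.card)
    (hfull : ∀ p ∈ P \ S, ∃ c : X, dist p c ≤ ε * ρ ∧
      z + 1 ≤ (S.filter (fun s => dist s c ≤ ε * ρ)).card) :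
    diamz z P - 4 * ε * ρ ≤ diamz z S := by
  have hεa : 0 ≤ ε * ρ := mul_nonneg hε hρ
  -- the set for S is nonempty
  obtain ⟨Q0, hQ0S, hQ0card⟩ := Finset.exists_subset_card_eq hz
  conv_rhs => rw [diamz]
  have hne : {D : ℝ | ∃ Q : Finset X, Q ⊆ S ∧ Q.card = z ∧
      D = Metric.diam (↑(S \ Q) : Set X)}.Nonempty :=
    ⟨Metric.diam (↑(S \ Q0) : Set X), Q0, hQ0S, hQ0card, rfl⟩
  apply le_csInf hne
  rintro D ⟨Q, hQS, hQcard, rfl⟩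
  rw [sub_le_iff_le_add]
  -- every point of P \ Q is within 2ερ of S \ Q
  have hwithin : ∀ p ∈ P \ Q, ∃ s ∈ S \ Q, dist p s ≤ 2 * (ε * ρ) := by
    intro p hp
    rw [Finset.mem_sdiff] at hp
    by_cases hpS : p ∈ S
    · exact ⟨p, Finset.mem_sdiff.2 ⟨hpS, hp.2⟩, by simp [hεa]⟩
    · obtain ⟨c, hpc, hcard⟩ := hfull p (Finset.mem_sdiff.2 ⟨hp.1, hpS⟩)
      have : ¬ (S.filter (fun s => dist s c ≤ ε * ρ)) ⊆ Q := by
        intro hsub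
        have := Finset.card_le_card hsub
        omega
      obtain ⟨s, hs, hsQ⟩ := Finset.not_subset.1 this
      rw [Finset.mem_filter] at hs
      refine ⟨s, Finset.mem_sdiff.2 ⟨hs.1, hsQ⟩, ?_⟩
      calc dist p s ≤ dist p c + dist s c := dist_triangle_right _ _ _
        _ ≤ ε * ρ + ε * ρ := add_le_add hpc hs.2
        _ = 2 * (ε * ρ) := by ring
  -- diam (P \ Q) ≤ diam (S \ Q) + 4ερ
  have hbdd : Bornology.IsBounded (↑(S \ Q) : Set X) := (S \ Q).finite_toSet.isBounded
  have hdiam : Metric.diam (↑(P \ Q) : Set X) ≤ Metric.diam (↑(S \ Q) : Set X) + 4 * ε * ρ := by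
    apply Metric.diam_le_of_forall_dist_le
    · positivity
    · intro x hx y hy
      obtain ⟨a, ha, hxa⟩ := hwithin x hx
      obtain ⟨b, hb, hyb⟩ := hwithin y hy
      have hab : dist a b ≤ Metric.diam (↑(S \ Q) : Set X) :=
        Metric.dist_le_diam_of_mem hbdd (by exact_mod_cast ha) (by exact_mod_cast hb)
      calc dist x y ≤ dist x a + dist a b + dist b y := dist_triangle4 _ _ _ _
        _ ≤ 2 * (ε * ρ) + Metric.diam (↑(S \ Q) : Set X) + 2 * (ε * ρ) := by
            refine add_le_add (add_le_add hxa hab) ?_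
            rwa [dist_comm]
        _ = Metric.diam (↑(S \ Q) : Set X) + 4 * ε * ρ := by ring
  refine le_trans ?_ (by linarith : Metric.diam (↑(P \ Q) : Set X) ≤ Metric.diam (↑(S \ Q) : Set X) + 4 * ε * ρ)
  apply csInf_le
  · exact ⟨0, by rintro D ⟨Q', _, _, rfl⟩; exact Metric.diam_nonneg⟩
  · exact ⟨Q, hQS.trans hSP, hQcard, rfl⟩
end
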